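/- arXiv:math/0308192 — 2 statements merged into one kernel-verified Lean document; each statement's English description precedes it below -/
import Mathlib

section
/- Let S be a self-adjoint element of a unital C*-algebra and let λ ∈ M_m(ℂ) with Im λ positive definite. Then λ ⊗ 1 − 1_m ⊗ S (in M_m(ℂ) ⊗ A) is invertible and ‖(λ ⊗ 1 − 1_m ⊗ S)⁻¹‖ ≤ ‖(Im λ)⁻¹‖. -/
open Matrix Complex
open scoped ComplexOrder

/-- The operator norm of a complex matrix. -/
noncomputable def matOpNorm {m : ℕ} (a : Matrix (Fin m) (Fin m) ℂ) : ℝ :=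
  ‖Matrix.toEuclideanCLM (𝕜 := ℂ) a‖

/-- The matrix imaginary part `Im λ = (λ − λ*)/(2i)`. -/
noncomputable def imPart {m : ℕ} (a : Matrix (Fin m) (Fin m) ℂ) :
    Matrix (Fin m) (Fin m) ℂ :=
  ((2 * I)⁻¹ : ℂ) • (a - aᴴ)

lemma key_unit {B : Type*} [CStarAlgebra B] {a : B} (ha : IsSelfAdjoint a) :
    ∃ u : Bˣ, (↑u : B) = a + I • 1 ∧ ‖(↑u⁻¹ : B)‖ ≤ 1 := by
  have hns : IsStarNormal a := ha.isStarNormal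
  have hspec : ∀ z ∈ spectrum ℂ a, z + I ≠ 0 := by
    intro z hz h0
    have him : z.im = 0 := ha.im_eq_zero_of_mem_spectrum hz
    have := congrArg Complex.im h0
    simp [him] at this
  have hcfc : cfc (fun z : ℂ => z + I) a = a + I • 1 := by
    rw [cfc_add a (fun z : ℂ => z) (fun _ : ℂ => I), cfc_id' ℂ a, cfc_const I a,
      Algebra.algebraMap_eq_smul_one]
  refine ⟨cfcUnits (fun z : ℂ => z + I) a hspec, by simpa using hcfc, ?_⟩
  have : ((cfcUnits (fun z : ℂ => z + I) a hspec)⁻¹ : Bˣ) = cfc (fun z : ℂ => (z + I)⁻¹) a := by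
    simp [cfcUnits]
  rw [this]
  refine norm_cfc_le zero_le_one fun z hz => ?_
  have him : z.im = 0 := ha.im_eq_zero_of_mem_spectrum hz
  have h1 : (1 : ℝ) ≤ ‖z + I‖ := by
    have := Complex.abs_im_le_norm (z + I)
    simpa [him] using this
  rw [norm_inv]
  exact inv_le_one_of_one_le₀ h1

/-- Let `S` be a self-adjoint element of a unital C*-algebra `B` and
`λ ∈ M_m(ℂ)` with `Im λ` positive definite.  Realizing the C*-tensor product
`M_m(ℂ) ⊗ A` as a unital C*-algebra `B` via an isometric unital *-homomorphism
`φ : M_m(ℂ) → B` (the copy `a ↦ a ⊗ 1`) whose range commutes with `S` (the copy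
`1_m ⊗ S` of a selfadjoint `S ∈ A`), the element `λ ⊗ 1 − 1_m ⊗ S` is invertible and
`‖(λ ⊗ 1 − 1_m ⊗ S)⁻¹‖ ≤ ‖(Im λ)⁻¹‖`. -/
theorem resolvent_isUnit_and_norm_inv_le {m : ℕ} {B : Type*} [CStarAlgebra B]
    (φ : Matrix (Fin m) (Fin m) ℂ →⋆ₐ[ℂ] B)
    (hφ : ∀ x, ‖φ x‖ = matOpNorm x)
    (S : B) (hS : IsSelfAdjoint S) (hcomm : ∀ x, Commute (φ x) S)
    (lam : Matrix (Fin m) (Fin m) ℂ) (hlam : (imPart lam).PosDef) :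
    IsUnit (φ lam - S) ∧
      ‖Ring.inverse (φ lam - S)‖ ≤ matOpNorm (imPart lam)⁻¹ := by
  set P : Matrix (Fin m) (Fin m) ℂ := imPart lam with hPdef
  have hPsd : P.PosSemidef := hlam.posSemidef
  obtain ⟨Q, hQher, hQQ⟩ : ∃ Q : Matrix (Fin m) (Fin m) ℂ, Q.IsHermitian ∧ Q * Q = P := by
    open scoped MatrixOrder in
    exact ⟨CFC.sqrt P, (CFC.sqrt_nonneg P).posSemidef.isHermitian,
      CFC.sqrt_mul_sqrt_self P hPsd.nonneg⟩
  -- Q is invertible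
  have hQunit : IsUnit Q := by
    rw [Matrix.isUnit_iff_isUnit_det]
    have hPu : IsUnit P.det := (Matrix.isUnit_iff_isUnit_det P).mp hlam.isUnit
    rw [← hQQ, Matrix.det_mul] at hPu
    exact isUnit_of_mul_isUnit_left hPu
  set uQ : (Matrix (Fin m) (Fin m) ℂ)ˣ := hQunit.unit with huQ
  have huQinv : ((uQ⁻¹ : _ˣ) : Matrix (Fin m) (Fin m) ℂ) = Q⁻¹ := Matrix.coe_units_inv uQ
  -- lift to B
  set uR : Bˣ := Units.map (φ : Matrix (Fin m) (Fin m) ℂ →* B) uQ with huR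
  have huRval : (↑uR : B) = φ Q := rfl
  have huRinv : ((uR⁻¹ : Bˣ) : B) = φ Q⁻¹ := by
    rw [huR, Units.coe_map_inv]
    exact congrArg φ huQinv
  have hRsa : IsSelfAdjoint (φ Q) := hQher.isSelfAdjoint.map φ
  have huRstar : star uR = uR := Units.ext (by rw [Units.coe_star, huRval]; exact hRsa.star_eq)
  have hRinvsa : IsSelfAdjoint ((uR⁻¹ : Bˣ) : B) := by
    rw [_root_.IsSelfAdjoint, ← Units.coe_star_inv, huRstar]
  -- the Hermitian part
  set H : Matrix (Fin m) (Fin m) ℂ := lam - I • P with hHdef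
  have hH2 : H = ((2 : ℂ)⁻¹) • (lam + lamᴴ) := by
    rw [hHdef, hPdef, imPart, smul_smul]
    have : I * (2 * I)⁻¹ = (2 : ℂ)⁻¹ := by
      field_simp
    rw [this]
    ext i j
    simp [Matrix.sub_apply, Matrix.add_apply, Matrix.smul_apply]
    ring
  have hHher : H.IsHermitian := by
    rw [Matrix.IsHermitian, hH2, Matrix.conjTranspose_smul, Matrix.conjTranspose_add,
      Matrix.conjTranspose_conjTranspose]
    congr 1
    · simp
    · rw [add_comm]
  have ha0 : IsSelfAdjoint (φ H - S) := (hHher.isSelfAdjoint.map φ).sub hS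
  -- the conjugated element
  set A : B := ↑uR⁻¹ * (φ H - S) * ↑uR⁻¹ with hAdef
  have hAsa : IsSelfAdjoint A := by
    have := ha0.conjugate ((uR⁻¹ : Bˣ) : B)
    rwa [hRinvsa.star_eq] at this
  obtain ⟨uC, huC, huCnorm⟩ := key_unit hAsa
  -- the factorization
  have hfact : φ lam - S = ↑uR * ↑uC * ↑uR := by
    rw [huC, hAdef]
    have hlam' : φ lam = φ H + I • φ P := by
      rw [hHdef]
      rw [map_sub, _root_.map_smul, sub_add_cancel]
    rw [hlam']
    have hRR : (↑uR : B) * ↑uR = φ P := by rw [huRval, ← _root_.map_mul, hQQ]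
    calc φ H + I • φ P - S = (φ H - S) + I • (↑uR * ↑uR : B) := by rw [hRR]; abel
      _ = ↑uR * (↑uR⁻¹ * (φ H - S) * ↑uR⁻¹ + I • 1) * ↑uR := by
          rw [mul_add, add_mul]
          congr 1
          · symm
            calc (↑uR : B) * (↑uR⁻¹ * (φ H - S) * ↑uR⁻¹) * ↑uR
                = (↑uR * ↑uR⁻¹) * (φ H - S) * (↑uR⁻¹ * ↑uR) := by noncomm_ring
              _ = φ H - S := by rw [Units.mul_inv, Units.inv_mul, one_mul, mul_one]
          · rw [mul_smul_comm, smul_mul_assoc, mul_one]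
  set u : Bˣ := uR * uC * uR with hu
  have huval : (↑u : B) = φ lam - S := by rw [hu, hfact]; rfl
  constructor
  · exact ⟨u, huval⟩
  · have hinv : Ring.inverse (φ lam - S) = (↑(u⁻¹) : B) := by
      rw [← huval, Ring.inverse_unit]
    rw [hinv, hu]
    have : ((uR * uC * uR)⁻¹ : Bˣ) = uR⁻¹ * uC⁻¹ * uR⁻¹ := by
      rw [_root_.mul_inv_rev, _root_.mul_inv_rev, mul_assoc]
    rw [this]
    push_cast
    calc ‖(↑uR⁻¹ * ↑uC⁻¹ * ↑uR⁻¹ : B)‖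
        ≤ ‖(↑uR⁻¹ * ↑uC⁻¹ : B)‖ * ‖(↑uR⁻¹ : B)‖ := norm_mul_le _ _
      _ ≤ ‖(↑uR⁻¹ : B)‖ * ‖(↑uC⁻¹ : B)‖ * ‖(↑uR⁻¹ : B)‖ := by
          gcongr; exact norm_mul_le _ _
      _ ≤ ‖(↑uR⁻¹ : B)‖ * 1 * ‖(↑uR⁻¹ : B)‖ := by
          gcongr
      _ = ‖(↑uR⁻¹ : B)‖ * ‖(↑uR⁻¹ : B)‖ := by ring
      _ = ‖star ((uR⁻¹ : Bˣ) : B) * ↑uR⁻¹‖ := (CStarRing.norm_star_mul_self).symm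
      _ = matOpNorm P⁻¹ := by
          rw [hRinvsa.star_eq, huRinv, ← _root_.map_mul, ← Matrix.mul_inv_rev, hQQ, hφ]
end

section
/- Let F: ℝ → [0,1] be the cumulative distribution function of a nonnegative random variable Z (i.e., F(t) = P(Z ≤ t)), and suppose F(2 + ε) ≥ 1 − 2n·exp(−nε²/2) for all ε > 0. Then, with ε₀ = √(2 log(2n)/n), for every integer k ≥ 2: E{Z^k} ≤ (2 + ε₀)^k + k·∫₀^∞ (2 + t + ε₀)^{k−1}·e^{−nt²/2} dt. -/
open MeasureTheory
open scoped ENNReal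
open Set

set_option maxHeartbeats 1000000

lemma aux_int {b : ℝ} (hb : 0 < b) (M : ℝ) (m : ℕ) :
    IntegrableOn (fun s : ℝ => (M + s) ^ m * Real.exp (-b * s ^ 2)) (Set.Ioi 0) := by
  have heq : (fun s : ℝ => (M + s) ^ m * Real.exp (-b * s ^ 2)) =
      fun s => ∑ i ∈ Finset.range (m + 1),
        (M ^ i * (m.choose i : ℝ)) * (s ^ (m - i) * Real.exp (-b * s ^ 2)) := by
    funext s
    rw [add_pow, Finset.sum_mul]
    exact Finset.sum_congr rfl fun i _ => by ring
  rw [heq]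
  apply integrable_finset_sum
  intro i hi
  apply Integrable.const_mul
  have h := integrableOn_rpow_mul_exp_neg_mul_sq hb (s := ((m - i : ℕ) : ℝ))
    (lt_of_lt_of_le (by norm_num : (-1:ℝ) < 0) (Nat.cast_nonneg _))
  refine h.congr_fun (fun s hs => ?_) measurableSet_Ioi
  simp only [Real.rpow_natCast]

/-- Let `F` be the cumulative distribution function of a nonnegative
random variable `Z`, and suppose `F(2+ε) ≥ 1 − 2n·exp(−nε²/2)` for all `ε > 0`.  Then,
with `ε₀ = √(2 log(2n)/n)`, for every `k ≥ 2`: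
`E{Z^k} ≤ (2+ε₀)^k + k·∫₀^∞ (2+t+ε₀)^{k−1} e^{−nt²/2} dt`. -/
theorem moment_bound_of_cdf_tail {Ω : Type*} [MeasureSpace Ω]
    [IsProbabilityMeasure (volume : Measure Ω)]
    (n : ℕ) (hn : 1 ≤ n) (Z : Ω → ℝ) (hZ : ∀ ω, 0 ≤ Z ω)
    (F : ℝ → ℝ) (hF : ∀ t : ℝ, F t = (volume {ω | Z ω ≤ t}).toReal)
    (htail : ∀ ε : ℝ, 0 < ε → 1 - 2 * n * Real.exp (-(n : ℝ) * ε ^ 2 / 2) ≤ F (2 + ε))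
    (k : ℕ) (hk : 2 ≤ k) :
    ∫⁻ ω, ENNReal.ofReal (Z ω ^ k) ≤
      ENNReal.ofReal ((2 + Real.sqrt (2 * Real.log (2 * n) / n)) ^ k +
        k * ∫ t in Set.Ioi (0 : ℝ),
          (2 + t + Real.sqrt (2 * Real.log (2 * n) / n)) ^ (k - 1) *
            Real.exp (-(n : ℝ) * t ^ 2 / 2)) := by
  have hn0 : (0:ℝ) < n := by exact_mod_cast hn
  have hk0 : k ≠ 0 := by omega
  have hn1 : (1:ℝ) ≤ n := by exact_mod_cast hn
  set ε : ℝ := Real.sqrt (2 * Real.log (2 * n) / n) with hεdef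
  have hlog : 0 ≤ Real.log (2 * n) := Real.log_nonneg (by push_cast; linarith)
  have hε : 0 ≤ ε := Real.sqrt_nonneg _
  set M : ℝ := 2 + ε with hMdef
  have hM2 : (2:ℝ) ≤ M := by simp [hMdef]; linarith
  have hM0 : (0:ℝ) < M := by linarith
  have hεsq : ε ^ 2 = 2 * Real.log (2 * n) / n := by
    rw [hεdef, Real.sq_sqrt (by positivity)]
  have hexp : Real.exp (-(n : ℝ) * ε ^ 2 / 2) = (2 * (n:ℝ))⁻¹ := by
    rw [hεsq]
    have : -(n : ℝ) * (2 * Real.log (2 * n) / n) / 2 = -Real.log (2 * n) := by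
      field_simp
    rw [this, Real.exp_neg, Real.exp_log (by positivity)]
  clear_value ε M
  -- measurable minorant
  obtain ⟨W, hWmeas, hWle, hWeq⟩ :=
    exists_measurable_le_lintegral_eq (volume : Measure Ω) (fun ω => ENNReal.ofReal (Z ω ^ k))
  have hWlt : ∀ ω, W ω ≠ ∞ := fun ω => ((hWle ω).trans_lt ENNReal.ofReal_lt_top).ne
  set w : Ω → ℝ := fun ω => (W ω).toReal with hwdef
  have hw_meas : Measurable w := hWmeas.ennreal_toReal
  have hw_nonneg : ∀ ω, 0 ≤ w ω := fun ω => ENNReal.toReal_nonneg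
  have hw_le : ∀ ω, w ω ≤ Z ω ^ k := fun ω =>
    ENNReal.toReal_le_of_le_ofReal (pow_nonneg (hZ ω) k) (hWle ω)
  have hofReal : ∀ ω, ENNReal.ofReal (w ω) = W ω := fun ω => ENNReal.ofReal_toReal (hWlt ω)
  set v : Ω → ℝ := fun ω => w ω ^ ((k : ℝ)⁻¹) with hvdef
  have hv_meas : Measurable v := (Real.continuous_rpow_const (by positivity)).measurable.comp hw_meas
  have hv_nonneg : ∀ ω, 0 ≤ v ω := fun ω => Real.rpow_nonneg (hw_nonneg ω) _
  have hv_pow : ∀ ω, v ω ^ k = w ω := fun ω =>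
    Real.rpow_inv_natCast_pow (hw_nonneg ω) hk0
  have hv_le : ∀ ω, v ω ≤ Z ω := by
    intro ω
    refine le_of_pow_le_pow_left₀ hk0 (hZ ω) ?_
    rw [hv_pow ω]; exact hw_le ω
  -- layer cake
  have gcont : Continuous (fun t : ℝ => (k:ℝ) * t ^ (k-1)) := by fun_prop
  have lc := lintegral_comp_eq_lintegral_meas_le_mul (volume : Measure Ω)
    (f := v) (g := fun t => (k:ℝ) * t ^ (k-1)) (ae_of_all _ hv_nonneg) hv_meas.aemeasurable
    (fun t ht => gcont.intervalIntegrable _ _)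
    (by
      filter_upwards [ae_restrict_mem measurableSet_Ioi] with t ht
      have : (0:ℝ) < t := ht
      positivity)
  have hinner : ∀ a : ℝ, 0 ≤ a → (∫ t in (0:ℝ)..a, (k:ℝ) * t ^ (k-1)) = a ^ k := by
    intro a ha
    rw [intervalIntegral.integral_const_mul, integral_pow]
    have h1 : k - 1 + 1 = k := by omega
    rw [h1, zero_pow hk0]
    field_simp
    have hk1 : ((k - 1 : ℕ) : ℝ) + 1 = k := by rw [Nat.cast_sub (by omega)]; push_cast; ring
    rw [hk1]; ring
  have hLHS : ∫⁻ ω, ENNReal.ofReal (Z ω ^ k) =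
      ∫⁻ t in Ioi (0:ℝ), volume {a : Ω | t ≤ v a} * ENNReal.ofReal ((k:ℝ) * t ^ (k-1)) := by
    rw [hWeq, ← lc]
    apply lintegral_congr
    intro ω
    rw [hinner (v ω) (hv_nonneg ω), hv_pow ω, hofReal ω]
  rw [hLHS]
  -- tail bound
  have hρ2 : ∀ t : ℝ, M < t →
      volume {a : Ω | t ≤ v a} ≤ ENNReal.ofReal (Real.exp (-(n:ℝ) * (t - M) ^ 2 / 2)) := by
    intro t ht
    set A : Set Ω := {a | t ≤ v a} with hAdef
    have hA : MeasurableSet A := measurableSet_le measurable_const hv_meas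
    have h2t : (2:ℝ) < t := lt_of_le_of_lt hM2 ht
    have hsub : ∀ t' : ℝ, 2 < t' → t' < t →
        volume A ≤ ENNReal.ofReal (2 * n * Real.exp (-(n:ℝ) * (t' - 2) ^ 2 / 2)) := by
      intro t' h2 hlt
      have hcompl : {ω | Z ω ≤ t'} ⊆ Aᶜ := by
        intro ω hω
        simp only [A, mem_compl_iff, mem_setOf_eq, not_le]
        calc v ω ≤ Z ω := hv_le ω
        _ ≤ t' := hω
        _ < t := hlt
      have h1 : volume {ω | Z ω ≤ t'} ≤ volume Aᶜ := measure_mono hcompl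
      have h2' : volume Aᶜ = 1 - volume A := prob_compl_eq_one_sub hA
      have htail' := htail (t' - 2) (by linarith)
      rw [show (2:ℝ) + (t' - 2) = t' by ring, hF t'] at htail'
      have hAne : volume A ≠ ∞ := measure_ne_top _ _
      have hA1 : volume A ≤ 1 := prob_le_one
      have hc : (volume Aᶜ).toReal = 1 - (volume A).toReal := by
        rw [h2', ENNReal.toReal_sub_of_le hA1 ENNReal.one_ne_top]
        simp
      have h1r : (volume {ω | Z ω ≤ t'}).toReal ≤ (volume Aᶜ).toReal :=
        ENNReal.toReal_mono (measure_ne_top _ _) h1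
      have hAr : (volume A).toReal ≤ 2 * n * Real.exp (-(n:ℝ) * (t' - 2) ^ 2 / 2) := by
        rw [hc] at h1r
        linarith
      calc volume A = ENNReal.ofReal (volume A).toReal := (ENNReal.ofReal_toReal hAne).symm
      _ ≤ _ := ENNReal.ofReal_le_ofReal hAr
    have hlim : volume A ≤ ENNReal.ofReal (2 * n * Real.exp (-(n:ℝ) * (t - 2) ^ 2 / 2)) := by
      have htends : Filter.Tendsto (fun t' : ℝ =>
          ENNReal.ofReal (2 * n * Real.exp (-(n:ℝ) * (t' - 2) ^ 2 / 2))) (nhdsWithin t (Iio t))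
          (nhds (ENNReal.ofReal (2 * n * Real.exp (-(n:ℝ) * (t - 2) ^ 2 / 2)))) :=
        ((ENNReal.continuous_ofReal.comp (by fun_prop)).tendsto t).mono_left
          nhdsWithin_le_nhds
      refine ge_of_tendsto htends ?_
      filter_upwards [Ioo_mem_nhdsLT h2t] with t' ht' using hsub t' ht'.1 ht'.2
    refine hlim.trans (ENNReal.ofReal_le_ofReal ?_)
    have hkey : (t - M) ^ 2 + ε ^ 2 ≤ (t - 2) ^ 2 := by
      have h : t - 2 = (t - M) + ε := by rw [hMdef]; ring
      rw [h]
      nlinarith [sub_nonneg.mpr ht.le, hε]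
    have hexp2 : Real.exp (-(n:ℝ) * (t-2)^2/2) ≤
        Real.exp (-(n:ℝ) * (t-M)^2/2) * Real.exp (-(n:ℝ) * ε^2/2) := by
      rw [← Real.exp_add]
      apply Real.exp_le_exp.mpr
      have hmul : (n:ℝ) * ((t - M)^2 + ε^2) ≤ (n:ℝ) * (t-2)^2 :=
        mul_le_mul_of_nonneg_left hkey hn0.le
      linarith
    calc 2 * (n:ℝ) * Real.exp (-(n:ℝ) * (t-2)^2/2)
        ≤ 2 * (n:ℝ) * (Real.exp (-(n:ℝ) * (t-M)^2/2) * (2 * (n:ℝ))⁻¹) := by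
          rw [← hexp]
          exact mul_le_mul_of_nonneg_left hexp2 (by positivity)
    _ = Real.exp (-(n:ℝ) * (t-M)^2/2) := by field_simp
  -- set up the RHS integral
  have hb : (0:ℝ) < (n:ℝ)/2 := by positivity
  set I := ∫ t in Ioi (0:ℝ), (2 + t + ε) ^ (k-1) * Real.exp (-(n:ℝ) * t^2/2) with hIdef
  have hfun_eq : ∀ s : ℝ, (M + s)^(k-1) * Real.exp (-((n:ℝ)/2) * s^2)
      = (2 + s + ε)^(k-1) * Real.exp (-(n:ℝ) * s^2/2) := by
    intro s
    rw [show M + s = 2 + s + ε by rw [hMdef]; ring,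
      show -((n:ℝ)/2) * s^2 = -(n:ℝ) * s^2/2 by ring]
  have hI_int : IntegrableOn (fun t : ℝ => (2 + t + ε)^(k-1) * Real.exp (-(n:ℝ) * t^2/2))
      (Ioi 0) :=
    (aux_int hb M (k-1)).congr_fun (fun s _ => hfun_eq s) measurableSet_Ioi
  have hI_nonneg : 0 ≤ I := by
    refine setIntegral_nonneg measurableSet_Ioi fun t ht => ?_
    have ht' : (0:ℝ) < t := ht
    positivity
  -- split the domain
  rw [← Ioc_union_Ioi_eq_Ioi hM0.le, lintegral_union measurableSet_Ioi (Ioc_disjoint_Ioi le_rfl)]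
  have hpart1 : ∫⁻ t in Ioc (0:ℝ) M, volume {a : Ω | t ≤ v a} * ENNReal.ofReal ((k:ℝ)*t^(k-1))
      ≤ ENNReal.ofReal (M^k) := by
    calc ∫⁻ t in Ioc (0:ℝ) M, volume {a : Ω | t ≤ v a} * ENNReal.ofReal ((k:ℝ)*t^(k-1))
        ≤ ∫⁻ t in Ioc (0:ℝ) M, 1 * ENNReal.ofReal ((k:ℝ)*t^(k-1)) :=
          lintegral_mono fun t => mul_le_mul_left prob_le_one _
    _ = ∫⁻ t in Ioc (0:ℝ) M, ENNReal.ofReal ((k:ℝ)*t^(k-1)) := by simp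
    _ = ENNReal.ofReal (∫ t in Ioc (0:ℝ) M, (k:ℝ)*t^(k-1)) := by
          rw [ofReal_integral_eq_lintegral_ofReal (gcont.integrableOn_Ioc)
            (by
              filter_upwards [ae_restrict_mem measurableSet_Ioc] with t ht
              have := ht.1
              positivity)]
    _ = ENNReal.ofReal (M^k) := by
          rw [← intervalIntegral.integral_of_le hM0.le, hinner M hM0.le]
  have hmp : MeasurePreserving (fun s : ℝ => s + M) volume volume :=
    measurePreserving_add_right volume M
  have hemb : MeasurableEmbedding (fun s : ℝ => s + M) :=
    (Homeomorph.addRight M).measurableEmbedding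
  have hpre : (fun s : ℝ => s + M) ⁻¹' (Ioi M) = Ioi 0 := by
    ext s
    simp [mem_Ioi]
  set f : ℝ → ℝ := fun t => Real.exp (-(n:ℝ)*(t-M)^2/2) * ((k:ℝ)*t^(k-1)) with hfdef
  have hcomp : ∀ s : ℝ, f (s + M) = (k:ℝ) * ((2 + s + ε)^(k-1) * Real.exp (-(n:ℝ) * s^2/2)) := by
    intro s
    rw [hfdef]
    simp only
    rw [show s + M - M = s by ring, show (2 + s + ε) = M + s by rw [hMdef]; ring]
    ring
  have hint2 : IntegrableOn f (Ioi M) := by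
    rw [← hmp.integrableOn_comp_preimage hemb, hpre]
    exact IntegrableOn.congr_fun (hI_int.const_mul (k:ℝ)) (fun s _ => (hcomp s).symm)
      measurableSet_Ioi
  have hpart2 : ∫⁻ t in Ioi M, volume {a : Ω | t ≤ v a} * ENNReal.ofReal ((k:ℝ)*t^(k-1))
      ≤ ENNReal.ofReal ((k:ℝ) * I) := by
    have step1 : ∫⁻ t in Ioi M, volume {a : Ω | t ≤ v a} * ENNReal.ofReal ((k:ℝ)*t^(k-1))
        ≤ ∫⁻ t in Ioi M, ENNReal.ofReal (f t) := by
      refine lintegral_mono_ae ?_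
      filter_upwards [ae_restrict_mem measurableSet_Ioi] with t ht
      rw [hfdef]
      simp only
      rw [ENNReal.ofReal_mul (Real.exp_nonneg _)]
      exact mul_le_mul_left (hρ2 t ht) _
    have step2 : ∫⁻ t in Ioi M, ENNReal.ofReal (f t) = ENNReal.ofReal (∫ t in Ioi M, f t) := by
      rw [ofReal_integral_eq_lintegral_ofReal hint2
        (by
          filter_upwards [ae_restrict_mem measurableSet_Ioi] with t ht
          have h0t : (0:ℝ) < t := lt_trans hM0 ht
          rw [hfdef]
          simp only
          positivity)]
    have step3 : ∫ t in Ioi M, f t = (k:ℝ) * I := by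
      rw [← hmp.setIntegral_preimage_emb hemb f (Ioi M), hpre]
      rw [show (fun s => f (s + M)) = fun s : ℝ =>
        (k:ℝ) * ((2 + s + ε)^(k-1) * Real.exp (-(n:ℝ) * s^2/2)) from funext hcomp]
      rw [integral_const_mul]
    rw [step2, step3] at step1
    exact step1
  calc (∫⁻ t in Ioc (0:ℝ) M, volume {a : Ω | t ≤ v a} * ENNReal.ofReal ((k:ℝ)*t^(k-1)))
        + ∫⁻ t in Ioi M, volume {a : Ω | t ≤ v a} * ENNReal.ofReal ((k:ℝ)*t^(k-1))
      ≤ ENNReal.ofReal (M^k) + ENNReal.ofReal ((k:ℝ) * I) := add_le_add hpart1 hpart2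
  _ = ENNReal.ofReal (M^k + (k:ℝ) * I) :=
      (ENNReal.ofReal_add (by positivity) (mul_nonneg (Nat.cast_nonneg k) hI_nonneg)).symm
end
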